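/- arXiv:2212.01130 — 2 statements merged into one kernel-verified Lean document; each statement's English description precedes it below -/
import Mathlib

section
/- For the bi-objective problem L1(θ) = 1 − exp(−‖θ − v‖²) and L2(θ) = 1 − exp(−‖θ + v‖²) with θ ∈ ℝ^d and v = (1/√d,…,1/√d), every point of the segment {t·v : t ∈ [−1, 1]} is Pareto optimal. -/
/-- Every point of the segment `{t • v : t ∈ [-1,1]}`, with `v = (1/√d,…,1/√d)`,
is Pareto optimal for `L1 θ = 1 - exp(-‖θ - v‖²)`, `L2 θ = 1 - exp(-‖θ + v‖²)`. -/
theorem stmt3 (d : ℕ) (hd : 0 < d) :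
    ∀ t : ℝ, t ∈ Set.Icc (-1 : ℝ) 1 →
      let v : EuclideanSpace ℝ (Fin d) := WithLp.toLp 2 (fun _ => 1 / Real.sqrt d)
      let L1 : EuclideanSpace ℝ (Fin d) → ℝ := fun θ => 1 - Real.exp (-‖θ - v‖ ^ 2)
      let L2 : EuclideanSpace ℝ (Fin d) → ℝ := fun θ => 1 - Real.exp (-‖θ + v‖ ^ 2)
      ¬ ∃ θ : EuclideanSpace ℝ (Fin d),
          (L1 θ ≤ L1 (t • v) ∧ L2 θ ≤ L2 (t • v)) ∧
          (L1 θ < L1 (t • v) ∨ L2 θ < L2 (t • v)) := by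
  intro t ht v L1 L2
  rintro ⟨θ, ⟨h1, h2⟩, hstrict⟩
  have hd' : (0:ℝ) < d := Nat.cast_pos.mpr hd
  have hv : ‖v‖ = 1 := by
    rw [EuclideanSpace.norm_eq]
    have : ∀ i : Fin d, ‖v i‖ ^ 2 = 1 / d := by
      intro i
      simp only [v, Real.norm_eq_abs, abs_div, abs_one]
      rw [div_pow, one_pow, abs_of_nonneg (Real.sqrt_nonneg _), Real.sq_sqrt hd'.le]
    rw [Finset.sum_congr rfl (fun i _ => this i)]
    simp only [Finset.sum_const, Finset.card_univ, Fintype.card_fin, nsmul_eq_mul]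
    rw [mul_one_div, div_self (ne_of_gt hd'), Real.sqrt_one]
  have hsub : t • v - v = (t - 1) • v := by rw [sub_smul, one_smul]
  have hadd : t • v + v = (t + 1) • v := by rw [add_smul, one_smul]
  have hn1 : ‖t • v - v‖ = 1 - t := by
    rw [hsub, norm_smul, hv, mul_one, Real.norm_eq_abs, abs_of_nonpos (by linarith [ht.2])]
    ring
  have hn2 : ‖t • v + v‖ = 1 + t := by
    rw [hadd, norm_smul, hv, mul_one, Real.norm_eq_abs, abs_of_nonneg (by linarith [ht.1])]
    ring
  -- convert the L-inequalities to norm inequalities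
  have key : ∀ (a b : ℝ), 0 ≤ a → 0 ≤ b →
      (1 - Real.exp (-a ^ 2) ≤ 1 - Real.exp (-b ^ 2)) → a ≤ b := by
    intro a b ha hb h
    have : Real.exp (-b ^ 2) ≤ Real.exp (-a ^ 2) := by linarith
    have h2 : a ^ 2 ≤ b ^ 2 := by
      have := Real.exp_le_exp.mp this; linarith
    nlinarith
  have keys : ∀ (a b : ℝ), 0 ≤ a → 0 ≤ b →
      (1 - Real.exp (-a ^ 2) < 1 - Real.exp (-b ^ 2)) → a < b := by
    intro a b ha hb h
    have : Real.exp (-b ^ 2) < Real.exp (-a ^ 2) := by linarith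
    have h2 : a ^ 2 < b ^ 2 := by
      have := Real.exp_lt_exp.mp this; linarith
    nlinarith
  have H1 : ‖θ - v‖ ≤ 1 - t := by
    have := key ‖θ - v‖ ‖t • v - v‖ (norm_nonneg _) (norm_nonneg _) h1
    rwa [hn1] at this
  have H2 : ‖θ + v‖ ≤ 1 + t := by
    have := key ‖θ + v‖ ‖t • v + v‖ (norm_nonneg _) (norm_nonneg _) h2
    rwa [hn2] at this
  have Htri : (2:ℝ) ≤ ‖θ - v‖ + ‖θ + v‖ := by
    have h2v : (θ + v) - (θ - v) = (2:ℝ) • v := by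
      rw [two_smul]; abel
    have := norm_sub_le (θ + v) (θ - v)
    rw [h2v, norm_smul, hv, mul_one, Real.norm_eq_abs] at this
    calc (2:ℝ) = |(2:ℝ)| := by norm_num
    _ ≤ ‖θ + v‖ + ‖θ - v‖ := this
    _ = ‖θ - v‖ + ‖θ + v‖ := by ring
  rcases hstrict with hs | hs
  · have := keys ‖θ - v‖ ‖t • v - v‖ (norm_nonneg _) (norm_nonneg _) hs
    rw [hn1] at this
    linarith
  · have := keys ‖θ + v‖ ‖t • v + v‖ (norm_nonneg _) (norm_nonneg _) hs
    rw [hn2] at this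
    linarith
end

section
/- Adding a non-dominated point strictly below the reference point strictly increases the hypervolume: if b satisfies b_i < z_i for all i and no s ∈ S satisfies s_i ≤ b_i for all i, then HV(S ∪ {b}) > HV(S). -/
open MeasureTheory

noncomputable def HV {J : ℕ} (z : Fin J → ℝ) (S : Finset (Fin J → ℝ)) : ENNReal :=
  volume (⋃ s ∈ S, Set.Icc s z)

/-- Adding a non-dominated point strictly below the reference point strictly
increases the hypervolume. -/
theorem stmt6 {J : ℕ} (z : Fin J → ℝ) (S : Finset (Fin J → ℝ)) (b : Fin J → ℝ)
    (hS : ∀ s ∈ S, ∀ i, s i ≤ z i)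
    (hb : ∀ i, b i < z i)
    (hnd : ¬ ∃ s ∈ S, ∀ i, s i ≤ b i) :
    HV z S < HV z (insert b S) := by
  push_neg at hnd
  have hdom : ∀ s ∈ S, ∃ i, b i < s i := by
    intro s hs
    obtain ⟨i, hi⟩ := hnd s hs
    exact ⟨i, hi⟩
  choose f hf using hdom
  classical
  set F : Finset ℝ := insert 1 ((S.attach.image (fun s => s.1 (f s.1 s.2) - b (f s.1 s.2))) ∪
      (Finset.univ.image (fun i => z i - b i))) with hF
  have hFne : F.Nonempty := ⟨1, Finset.mem_insert_self _ _⟩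
  set ε : ℝ := F.min' hFne with hε
  have hFpos : ∀ x ∈ F, 0 < x := by
    intro x hx
    rw [hF] at hx
    rcases Finset.mem_insert.1 hx with h | h
    · simp [h]
    rcases Finset.mem_union.1 h with h | h
    · obtain ⟨s, _, rfl⟩ := Finset.mem_image.1 h
      exact sub_pos.2 (hf s.1 s.2)
    · obtain ⟨i, _, rfl⟩ := Finset.mem_image.1 h
      exact sub_pos.2 (hb i)
  have hεpos : 0 < ε := hFpos _ (F.min'_mem hFne)
  set c : Fin J → ℝ := fun i => b i + ε / 2 with hc
  -- Icc b c is inside Icc b z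
  have hsub : Set.Icc b c ⊆ Set.Icc b z := by
    apply Set.Icc_subset_Icc_right
    intro i
    have : ε ≤ z i - b i := F.min'_le _ (by
      rw [hF]
      exact Finset.mem_insert_of_mem (Finset.mem_union_right _
        (Finset.mem_image.2 ⟨i, Finset.mem_univ _, rfl⟩)))
    simp only [hc]
    linarith
  -- Icc b c is disjoint from the old union
  have hdisj : Disjoint (Set.Icc b c) (⋃ s ∈ S, Set.Icc s z) := by
    rw [Set.disjoint_right]
    intro x hx hx'
    simp only [Set.mem_iUnion] at hx
    obtain ⟨s, hs, hxs⟩ := hx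
    have h1 : ε ≤ s (f s hs) - b (f s hs) := F.min'_le _ (by
      rw [hF]
      exact Finset.mem_insert_of_mem (Finset.mem_union_left _
        (Finset.mem_image.2 ⟨⟨s, hs⟩, S.mem_attach _, rfl⟩)))
    have h2 : x (f s hs) ≤ c (f s hs) := hx'.2 _
    have h3 : s (f s hs) ≤ x (f s hs) := hxs.1 _
    simp only [hc] at h2
    linarith
  have hvol : 0 < volume (Set.Icc b c) := by
    rw [Real.volume_Icc_pi]
    rw [CanonicallyOrderedAdd.prod_pos]
    intro i _
    simp only [hc]
    simp [ENNReal.ofReal_pos]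
    linarith
  -- old hypervolume is finite
  have hfin : HV z S ≠ ⊤ := by
    have : HV z S ≤ ∑ s ∈ S, volume (Set.Icc s z) := measure_biUnion_finset_le S _
    refine ne_top_of_le_ne_top ?_ this
    refine (ENNReal.sum_lt_top.2 ?_).ne
    intro s _
    exact (isCompact_Icc.measure_lt_top)
  have key : HV z S + volume (Set.Icc b c) ≤ HV z (insert b S) := by
    unfold HV
    rw [Finset.set_biUnion_insert]
    calc HV z S + volume (Set.Icc b c)
        = volume ((⋃ s ∈ S, Set.Icc s z) ∪ Set.Icc b c) := by
          rw [measure_union hdisj.symm measurableSet_Icc]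
          rfl
      _ ≤ volume (Set.Icc b z ∪ ⋃ s ∈ S, Set.Icc s z) := by
          apply measure_mono
          rw [Set.union_comm (Set.Icc b z)]
          exact Set.union_subset_union_right _ hsub
  calc HV z S < HV z S + volume (Set.Icc b c) :=
        ENNReal.lt_add_right hfin hvol.ne'
    _ ≤ HV z (insert b S) := key
end
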